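/- Let λ1, λ2 be reals with 0 < λ1 ≤ λ2 < 1 and let K1, K2 be positive integers satisfying 1/(K2λ2) + 2/(K1λ1) < 1. Then R < 2·R_D, where R = (1/λ1 − 1)·(1/(K2λ2) + 1/(K1λ1 + 1)) + (1/λ2 − 1)·(1 − 1/(K1λ1 + 1)) and R_D = (1/λ1 − 1)·(1 − (1−λ1)^{K1}) + (1−λ1)^{K1}·(1/λ2 − 1)·(1 − (1−λ2)^{K2}). -/

import Mathlib

/-- Bernoulli-type bound: `(1-x)^K * (1 + K*x) ≤ 1` for `0 ≤ x ≤ 1`. -/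
lemma bern_aux (x : ℝ) (hx0 : 0 ≤ x) (hx1 : x ≤ 1) (K : ℕ) :
    (1 - x) ^ K * (1 + (K : ℝ) * x) ≤ 1 := by
  induction K with
  | zero => simp
  | succ n ih =>
      have hpow : (0:ℝ) ≤ (1 - x) ^ n := pow_nonneg (by linarith) n
      have h2 : (1 - x) * (1 + ((n:ℝ) + 1) * x) ≤ 1 + (n:ℝ) * x := by
        nlinarith [sq_nonneg x, mul_nonneg (mul_nonneg (Nat.cast_nonneg (α := ℝ) n) hx0) hx0]
      have : (1 - x) ^ (n + 1) * (1 + ((n:ℕ) + 1 : ℝ) * x)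
          = (1 - x) ^ n * ((1 - x) * (1 + ((n:ℝ) + 1) * x)) := by push_cast; ring
      calc (1 - x) ^ (n + 1) * (1 + ((n + 1 : ℕ) : ℝ) * x)
          = (1 - x) ^ n * ((1 - x) * (1 + ((n:ℝ) + 1) * x)) := by push_cast; ring
        _ ≤ (1 - x) ^ n * (1 + (n:ℝ) * x) := by
            exact mul_le_mul_of_nonneg_left h2 hpow
        _ ≤ 1 := ih

/-- order-optimality comparison, case `λ1 ≤ λ2` (inequalities (19)):
the CSM rate is less than twice the benchmark rate. -/
theorem csm_lt_two_benchmark (l1 l2 : ℝ) (K1 K2 : ℕ)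
    (h01 : 0 < l1) (h12 : l1 ≤ l2) (h21 : l2 < 1) (hK1 : 0 < K1) (hK2 : 0 < K2)
    (hcond : 1 / ((K2 : ℝ) * l2) + 2 / ((K1 : ℝ) * l1) < 1) :
    (1 / l1 - 1) * (1 / ((K2 : ℝ) * l2) + 1 / ((K1 : ℝ) * l1 + 1))
        + (1 / l2 - 1) * (1 - 1 / ((K1 : ℝ) * l1 + 1))
      < 2 * ((1 / l1 - 1) * (1 - (1 - l1) ^ K1)
          + (1 - l1) ^ K1 * (1 / l2 - 1) * (1 - (1 - l2) ^ K2)) := by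
  have hl1 : l1 < 1 := lt_of_le_of_lt h12 h21
  have h02 : 0 < l2 := lt_of_lt_of_le h01 h12
  have ha : 0 < (K1 : ℝ) * l1 :=
    mul_pos (by exact_mod_cast Nat.cast_pos.mpr hK1) h01
  have hb : 0 < (K2 : ℝ) * l2 :=
    mul_pos (by exact_mod_cast Nat.cast_pos.mpr hK2) h02
  set a : ℝ := (K1 : ℝ) * l1 with ha_def
  have hu : (0:ℝ) < a + 1 := by linarith
  have hc : 0 < 1 / l1 - 1 := by
    have : 1 < 1 / l1 := one_lt_one_div h01 hl1
    linarith
  have hd0 : 0 ≤ 1 / l2 - 1 := by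
    have : 1 ≤ 1 / l2 := one_le_one_div h02 h21.le
    linarith
  have hdc : 1 / l2 - 1 ≤ 1 / l1 - 1 := by
    have := one_div_le_one_div_of_le h01 h12
    linarith
  have hp0 : (0:ℝ) ≤ (1 - l1) ^ K1 := pow_nonneg (by linarith) _
  have hp : (1 - l1) ^ K1 ≤ 1 / (a + 1) := by
    rw [le_div_iff₀ hu]
    have := bern_aux l1 h01.le hl1.le K1
    calc (1 - l1) ^ K1 * (a + 1) = (1 - l1) ^ K1 * (1 + (K1:ℝ) * l1) := by ring
      _ ≤ 1 := this
  have hq0 : (0:ℝ) ≤ (1 - l2) ^ K2 := pow_nonneg (by linarith) _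
  have hq1 : (1 - l2) ^ K2 ≤ 1 := pow_le_one₀ (by linarith) (by linarith)
  have hu1 : 1 / (a + 1) ≤ 1 := by
    rw [div_le_one hu]; linarith
  have hid : 2 * a / (a + 1) = 2 * (1 - 1 / (a + 1)) := by
    field_simp
    ring
  have key : 1 / ((K2 : ℝ) * l2) + 1 < 2 * a / (a + 1) := by
    have h2a : 2 / (a + 1) < 2 / a :=
      div_lt_div_of_pos_left two_pos ha (lt_add_one a)
    have h1 : 1 / ((K2 : ℝ) * l2) + 2 / (a + 1) < 1 := by
      rw [ha_def]; linarith [hcond]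
    have h2u : 2 / (a + 1) = 2 * (1 / (a + 1)) := by ring
    rw [hid]; linarith
  -- assemble
  have A : (0:ℝ) ≤ ((1 / l1 - 1) - (1 / l2 - 1)) * (1 - 1 / (a + 1)) :=
    mul_nonneg (by linarith) (by linarith)
  have B : (1 / l1 - 1) * (1 / ((K2 : ℝ) * l2) + 1)
      < (1 / l1 - 1) * (2 * (1 - 1 / (a + 1))) := by
    rw [← hid]; exact mul_lt_mul_of_pos_left key hc
  have C : (0:ℝ) ≤ (1 / (a + 1) - (1 - l1) ^ K1) * (2 * (1 / l1 - 1)) :=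
    mul_nonneg (by linarith) (by linarith)
  have D : (0:ℝ) ≤ (1 - l1) ^ K1 * ((1 / l2 - 1) * (1 - (1 - l2) ^ K2)) :=
    mul_nonneg hp0 (mul_nonneg hd0 (by linarith))
  nlinarith [A, B, C, D]
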